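/- arXiv:2407.12169 — 4 statements merged into one kernel-verified Lean document; each statement's English description precedes it below -/
import Mathlib

section
/- Let k be a field with a non-Archimedean absolute value |·| such that dim_ℚ √|k*| = n is finite, and let l be a prime with gcd(l, char(k̃)) = 1 where k̃ is the residue field. Given finitely many elements a₁, …, a_s ∈ k*, there exist c₁, …, cₙ ∈ k* such that each aᵢ = uᵢ · (∏_{j=1}^n c_j^{μ_{ij}}) · bᵢ^l, where uᵢ is a unit of the valuation ring k°, bᵢ ∈ k*, and 0 ≤ μ_{ij} ≤ l−1 are integers. -/
open scoped NNReal

/-- The image under `Real.log` of the value group `|k*| ⊆ ℝ_{>0}` of a valued field. -/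
def logValueGroup (k : Type) [Field k] [Valued k ℝ≥0] : Set ℝ :=
  Real.log '' {r : ℝ | ∃ x : kˣ, ((Valued.v (x : k) : ℝ≥0) : ℝ) = r}

/-- `dim_ℚ √|k*|`, the rational rank of the value group of `k`, computed as the
ℚ-dimension of the ℚ-span of `log |k*|` (which equals the span of `log √|k*|`). -/
noncomputable def valRank (k : Type) [Field k] [Valued k ℝ≥0] : ℕ :=
  Module.finrank ℚ (Submodule.span ℚ (logValueGroup k))

/-- The valuation ring `k°` of a valued field. -/
noncomputable def valRing (k : Type) [Field k] [Valued k ℝ≥0] : ValuationSubring k :=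
  Valued.v.valuationSubring

/-- The residue field `k̃` of a valued field. -/
abbrev resF (k : Type) [Field k] [Valued k ℝ≥0] : Type :=
  IsLocalRing.ResidueField (valRing k)

section Aux

variable {k : Type} [Field k] [Valued k ℝ≥0]

/-- The valuation restricted to units, as a group hom to `ℝ≥0ˣ`. -/
noncomputable def vux : kˣ →* ℝ≥0ˣ :=
  Units.map (Valued.v : Valuation k ℝ≥0).toMonoidWithZeroHom.toMonoidHom

lemma vux_coe (x : kˣ) : ((vux x : ℝ≥0) : ℝ) = ((Valued.v (x : k) : ℝ≥0) : ℝ) := rfl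

/-- The logarithm of the valuation on units. -/
noncomputable def flog (x : kˣ) : ℝ := Real.log ((vux x : ℝ≥0) : ℝ)

lemma v_pos (x : kˣ) : (0 : ℝ) < ((vux x : ℝ≥0) : ℝ) :=
  NNReal.coe_pos.mpr (pos_iff_ne_zero.mpr (vux x).ne_zero)

lemma flog_mul (x y : kˣ) : flog (x * y) = flog x + flog y := by
  unfold flog
  rw [map_mul, Units.val_mul, NNReal.coe_mul,
    Real.log_mul (ne_of_gt (v_pos x)) (ne_of_gt (v_pos y))]

lemma flog_one : flog (1 : kˣ) = 0 := by
  unfold flog; rw [map_one, Units.val_one, NNReal.coe_one, Real.log_one]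

lemma flog_zpow (x : kˣ) (z : ℤ) : flog (x ^ z) = (z : ℝ) * flog x := by
  unfold flog
  rw [map_zpow, Units.val_zpow_eq_zpow_val, NNReal.coe_zpow, Real.log_zpow]

lemma flog_pow (x : kˣ) (m : ℕ) : flog (x ^ m) = (m : ℝ) * flog x := by
  have h := flog_zpow x (m : ℤ)
  rw [zpow_natCast] at h
  simpa using h

lemma flog_inv (x : kˣ) : flog x⁻¹ = - flog x := by
  have h := flog_zpow x (-1)
  rw [zpow_neg_one] at h
  simpa using h

lemma flog_prod {α : Type*} (t : Finset α) (g : α → kˣ) :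
    flog (∏ i ∈ t, g i) = ∑ i ∈ t, flog (g i) := by
  classical
  induction t using Finset.cons_induction with
  | empty => simpa using flog_one
  | cons a t ha ih => rw [Finset.prod_cons, Finset.sum_cons, flog_mul, ih]

lemma flog_mem (x : kˣ) : flog x ∈ logValueGroup k :=
  ⟨((Valued.v (x : k) : ℝ≥0) : ℝ), ⟨x, rfl⟩, rfl⟩

end Aux

/-- Main Decomposition Lemma: let `k` be a non-Archimedean valued field
with `dim_ℚ √|k*| = n` finite and `l` a prime with `gcd(l, char k̃) = 1` (i.e. `char k̃ ≠ l`).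
Given `a₁, …, a_s ∈ k*`, there exist `c₁, …, cₙ ∈ k*` such that each
`aᵢ = uᵢ · ∏ⱼ cⱼ^{μᵢⱼ} · bᵢ^l` with `uᵢ` a unit of `k°` (i.e. `|uᵢ| = 1`), `bᵢ ∈ k*`,
and `0 ≤ μᵢⱼ ≤ l − 1`. -/
theorem stmt2 (k : Type) [Field k] [Valued k ℝ≥0] (n : ℕ)
    (hfin : FiniteDimensional ℚ (Submodule.span ℚ (logValueGroup k)))
    (hn : valRank k = n)
    (l : ℕ) (hl : l.Prime) (hchar : ringChar (resF k) ≠ l)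
    (s : ℕ) (a : Fin s → kˣ) :
    ∃ c : Fin n → kˣ, ∃ u b : Fin s → kˣ, ∃ μ : Fin s → Fin n → ℕ,
      (∀ i j, μ i j ≤ l - 1) ∧
      (∀ i, Valued.v ((u i : k)) = 1) ∧
      (∀ i, a i = u i * (∏ j, c j ^ (μ i j)) * (b i) ^ l) := by
  classical
  have hl0 : (0 : ℤ) < (l : ℤ) := by exact_mod_cast hl.pos
  -- the ℤ-span of the logs of the aᵢ
  set M : Submodule ℤ ℝ := Submodule.span ℤ (Set.range fun i => flog (a i)) with hMdef
  have hmemM : ∀ i, flog (a i) ∈ M := fun i => Submodule.subset_span ⟨i, rfl⟩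
  haveI : Module.Finite ℤ M := Module.Finite.span_of_finite ℤ (Set.finite_range _)
  haveI : Module.Free ℤ M := Module.free_of_finite_type_torsion_free'
  set e : Module.Basis (Module.Free.ChooseBasisIndex ℤ M) ℤ M := Module.Free.chooseBasis ℤ M with he
  set ι := Module.Free.ChooseBasisIndex ℤ M
  -- the ℚ-span V
  set V : Submodule ℚ ℝ := Submodule.span ℚ (logValueGroup k) with hV
  have hMV : ∀ x : ℝ, x ∈ M → x ∈ V := by
    intro x hx
    have hle : M ≤ Submodule.restrictScalars ℤ V := by
      rw [hMdef, Submodule.span_le]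
      rintro _ ⟨i, rfl⟩
      exact Submodule.subset_span (flog_mem (a i))
    exact hle hx
  -- card ι ≤ n
  have hcard : Fintype.card ι ≤ n := by
    have hliZ : LinearIndependent ℤ (fun j : ι => ((e j : ℝ))) :=
      e.linearIndependent.map' M.subtype (Submodule.ker_subtype M)
    have hliQ : LinearIndependent ℚ (fun j : ι => ((e j : ℝ))) :=
      (LinearIndependent.iff_fractionRing ℤ ℚ).mp hliZ
    have hliV : LinearIndependent ℚ (fun j : ι => (⟨(e j : ℝ), hMV _ (e j).2⟩ : V)) :=
      hliQ.of_comp V.subtype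
    have hcf := hliV.fintype_card_le_finrank
    rwa [show Module.finrank ℚ V = n from hn] at hcf
  obtain ⟨emb⟩ : Nonempty (ι ↪ Fin n) :=
    Function.Embedding.nonempty_of_card_le (by simpa using hcard)
  -- choose preimages C j of the basis vectors
  have hCex : ∀ j : ι, ∃ w : Fin s → ℤ, (∑ i, w i • flog (a i)) = (e j : ℝ) := fun j =>
    (Submodule.mem_span_range_iff_exists_fun ℤ).mp ((e j).2)
  choose w hw using hCex
  set C : ι → kˣ := fun j => ∏ i, a i ^ (w j i) with hCdef
  have hC : ∀ j : ι, flog (C j) = (e j : ℝ) := by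
    intro j
    rw [hCdef]
    simp only
    rw [flog_prod, ← hw j]
    apply Finset.sum_congr rfl
    intro i _
    rw [flog_zpow, zsmul_eq_mul]
  -- coordinates
  set z : Fin s → ι → ℤ := fun i j => e.repr ⟨flog (a i), hmemM i⟩ j with hzdef
  have hz : ∀ i, flog (a i) = ∑ j, (z i j : ℝ) * flog (C j) := by
    intro i
    have h1 := congrArg (M.subtype) (e.sum_repr ⟨flog (a i), hmemM i⟩)
    simp only [map_sum, map_zsmul, Submodule.subtype_apply] at h1
    rw [← h1]
    apply Finset.sum_congr rfl
    intro j _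
    rw [hC j, zsmul_eq_mul]
  -- definitions
  set c : Fin n → kˣ := fun j' => if h : ∃ j, emb j = j' then C h.choose else 1 with hcdef
  set μ : Fin s → Fin n → ℕ :=
    fun i j' => if h : ∃ j, emb j = j' then (z i h.choose % l).toNat else 0 with hμdef
  set b : Fin s → kˣ := fun i => ∏ j, C j ^ (z i j / (l : ℤ)) with hbdef
  set X : Fin s → kˣ := fun i => (∏ j', c j' ^ (μ i j')) * (b i) ^ l with hXdef
  set u : Fin s → kˣ := fun i => a i * (X i)⁻¹ with hudef
  have hch : ∀ j : ι, (show ∃ j₀, emb j₀ = emb j from ⟨j, rfl⟩).choose = j :=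
    fun j => emb.injective (Exists.choose_spec (⟨j, rfl⟩ : ∃ j₀, emb j₀ = emb j))
  have hcemb : ∀ j : ι, c (emb j) = C j := by
    intro j
    rw [hcdef]
    simp only [dif_pos (⟨j, rfl⟩ : ∃ j₀, emb j₀ = emb j)]
    rw [hch j]
  have hμemb : ∀ i (j : ι), μ i (emb j) = (z i j % l).toNat := by
    intro i j
    rw [hμdef]
    simp only [dif_pos (⟨j, rfl⟩ : ∃ j₀, emb j₀ = emb j)]
    rw [hch j]
  have hμ0 : ∀ i j', (¬ ∃ j, emb j = j') → μ i j' = 0 := by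
    intro i j' h
    rw [hμdef]; simp only [dif_neg h]
  refine ⟨c, u, b, μ, ?_, ?_, ?_⟩
  · -- bound on μ
    intro i j'
    by_cases h : ∃ j, emb j = j'
    · have h1 : z i h.choose % l < l := Int.emod_lt_of_pos _ hl0
      have h2 : (0:ℤ) ≤ z i h.choose % l := Int.emod_nonneg _ (ne_of_gt hl0)
      have heq : μ i j' = (z i h.choose % l).toNat := by rw [hμdef]; simp only [dif_pos h]
      rw [heq]
      omega
    · rw [hμ0 i j' h]; exact Nat.zero_le _
  · -- |u i| = 1
    intro i
    have hflogu : flog (u i) = 0 := by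
      have hb : flog (b i) = ∑ j, ((z i j / (l : ℤ) : ℤ) : ℝ) * flog (C j) := by
        rw [hbdef]
        simp only
        rw [flog_prod]
        exact Finset.sum_congr rfl fun j _ => flog_zpow _ _
      have hsum1 : (∑ j', flog (c j' ^ (μ i j'))) =
          ∑ j : ι, ((z i j % l : ℤ) : ℝ) * flog (C j) := by
        have h0 : ∀ j' ∈ Finset.univ, j' ∉ Finset.univ.image emb →
            flog (c j' ^ μ i j') = 0 := by
          intro j' _ hj'
          have h : ¬ ∃ j, emb j = j' := fun hex =>
            hj' (Finset.mem_image.mpr ⟨hex.choose, Finset.mem_univ _, hex.choose_spec⟩)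
          rw [hμ0 i j' h, pow_zero, flog_one]
        rw [← Finset.sum_subset (Finset.subset_univ _) h0,
            Finset.sum_image (fun x _ y _ hxy => emb.injective hxy)]
        apply Finset.sum_congr rfl
        intro j _
        rw [hcemb j, hμemb i j, flog_pow]
        have h2 : (0:ℤ) ≤ z i j % l := Int.emod_nonneg _ (ne_of_gt hl0)
        have hcast := congrArg (fun t : ℤ => (t : ℝ)) (Int.toNat_of_nonneg h2)
        simp only [Int.cast_natCast] at hcast
        rw [hcast]
      have hX : flog (X i) = flog (a i) := by
        rw [hXdef]
        simp only
        rw [flog_mul, flog_prod, flog_pow, hsum1, hb, Finset.mul_sum,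
          ← Finset.sum_add_distrib, hz i]
        apply Finset.sum_congr rfl
        intro j _
        have hd : (z i j % l) + (l:ℤ) * (z i j / l) = z i j := Int.emod_add_mul_ediv (z i j) l
        have hcast : ((z i j % l : ℤ):ℝ) + (l:ℝ) * ((z i j / (l:ℤ) : ℤ):ℝ) = ((z i j : ℤ):ℝ) := by
          exact_mod_cast congrArg (fun t : ℤ => (t : ℝ)) hd
        linear_combination hcast * flog (C j)
      rw [hudef]
      simp only
      rw [flog_mul, flog_inv, hX]
      ring
    have hpos := v_pos (u i)
    have h1 : ((vux (u i) : ℝ≥0) : ℝ) = 1 := by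
      rcases Real.log_eq_zero.mp hflogu with h | h | h
      · exact absurd h (ne_of_gt hpos)
      · exact h
      · exact absurd h (by nlinarith)
    rw [vux_coe] at h1
    exact_mod_cast h1
  · -- the decomposition
    intro i
    rw [hudef]
    simp only
    rw [hXdef]
    simp only
    group
end

section
/- Let k be a complete ultrametric field whose residue field k̃ has characteristic different from 2, and suppose dim_ℚ √|k*| = n is finite. Then u(k) ≤ 2^n · u(k̃), where u denotes the u-invariant: the maximal dimension of an anisotropic quadratic form over the field. -/
open scoped NNReal

/-- `u(K) ≤ m`: every quadratic form over `K` of dimension `> m` is isotropic. -/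
def uInvLE (K : Type) [Field K] (m : ℝ) : Prop :=
  ∀ d : ℕ, (∃ q : QuadraticForm K (Fin d → K), q.Anisotropic) → (d : ℝ) ≤ m

open Filter


lemma nn_exists_pow_lt (δ : ℝ≥0) (hδ : δ < 1) (γ : ℝ≥0) (hγ : 0 < γ) : ∃ N : ℕ, δ ^ N < γ :=
  exists_pow_lt_of_lt_one hγ hδ

lemma exists_sqrt {k : Type} [Field k] [Valued k ℝ≥0] [CompleteSpace k]
    (h2 : Valued.v (2:k) = 1) {a b : k} (ha : Valued.v a = 1)
    (hab : Valued.v (b - a^2) < 1) : ∃ y : k, y^2 = b := by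
  have two_ne : (2:k) ≠ 0 := fun h => by simp [h] at h2
  set δ := Valued.v (b - a^2) with hδdef
  by_cases hδ0 : δ = 0
  · exact ⟨a, (sub_eq_zero.mp (Valued.v.zero_iff.mp hδ0)).symm⟩
  -- Newton iteration
  set f : ℕ → k := fun m => Nat.rec a (fun _ x => (x + b / x) / 2) m with hf
  have hf0 : f 0 = a := rfl
  have hfs : ∀ m, f (m+1) = (f m + b / f m) / 2 := fun m => rfl
  have inv : ∀ m, Valued.v (f m) = 1 ∧ Valued.v (f m ^ 2 - b) ≤ δ ^ (2^m) := by
    intro m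
    induction m with
    | zero =>
      refine ⟨ha, ?_⟩
      rw [pow_zero, pow_one, hf0]
      rw [show a ^ 2 - b = -(b - a^2) by ring, Valuation.map_neg]
    | succ m ih =>
      obtain ⟨h1, hle⟩ := ih
      have hx0 : f m ≠ 0 := fun h => by rw [h] at h1; simp at h1
      have key : f (m+1) ^ 2 - b = ((f m ^ 2 - b) / (2 * f m))^2 := by
        rw [hfs m]; field_simp; ring
      have keyd : f (m+1) - f m = (b - f m ^ 2) / (2 * f m) := by
        rw [hfs m]; field_simp; ring
      have hv21 : Valued.v (2 * f m) = 1 := by rw [Valuation.map_mul, h2, h1, one_mul]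
      have hv1 : Valued.v (f (m+1) ^ 2 - b) ≤ δ ^ (2^(m+1)) := by
        rw [key, Valuation.map_pow, map_div₀, hv21, div_one]
        calc Valued.v (f m ^2 - b) ^ 2 ≤ (δ ^ (2^m))^2 := pow_le_pow_left' hle 2
        _ = δ ^ (2^(m+1)) := by rw [← pow_mul, pow_succ]
      have hvd : Valued.v (f (m+1) - f m) < 1 := by
        rw [keyd, map_div₀, hv21, div_one, show b - f m ^2 = -(f m ^2 - b) by ring,
          Valuation.map_neg]
        calc Valued.v (f m ^2 - b) ≤ δ ^ (2^m) := hle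
        _ ≤ δ ^ 1 := pow_le_pow_of_le_one zero_le hab.le (Nat.one_le_two_pow)
        _ < 1 := by rwa [pow_one]
      refine ⟨?_, hv1⟩
      have : f (m+1) = f m + (f (m+1) - f m) := by ring
      rw [this, Valuation.map_add_eq_of_lt_left _ (by rw [h1]; exact hvd), h1]
  have hδ1 : δ < 1 := hab
  have hstep : ∀ s, Valued.v (f (s+1) - f s) ≤ δ ^ (2^s) := by
    intro s
    obtain ⟨h1, hle⟩ := inv s
    have hx0 : f s ≠ 0 := fun h => by rw [h] at h1; simp at h1
    have keyd : f (s+1) - f s = (b - f s ^ 2) / (2 * f s) := by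
      rw [hfs s]; field_simp; ring
    have hv21 : Valued.v (2 * f s) = 1 := by rw [Valuation.map_mul, h2, h1, one_mul]
    rw [keyd, map_div₀, hv21, div_one, show b - f s ^2 = -(f s ^2 - b) by ring,
      Valuation.map_neg]
    exact hle
  have mono : ∀ p i, Valued.v (f (p+i) - f p) ≤ δ ^ (2^p) := by
    intro p i
    induction i with
    | zero => simp
    | succ i ih =>
      have hsplit : f (p+i+1) - f p = (f (p+i+1) - f (p+i)) + (f (p+i) - f p) := by ring
      rw [show p + (i+1) = (p+i)+1 from rfl, hsplit]
      refine le_trans (Valued.v.map_add _ _) (max_le (le_trans (hstep (p+i)) ?_) ih)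
      exact pow_le_pow_of_le_one zero_le hδ1.le
        (Nat.pow_le_pow_right (by norm_num) (Nat.le_add_right p i))
  have hNgam : ∀ γ : ℝ≥0ˣ, ∃ N : ℕ, ∀ m, N ≤ m → δ ^ (2^m) < γ := by
    intro γ
    obtain ⟨N, hN⟩ := exists_pow_lt_of_lt_one (pos_iff_ne_zero.mpr γ.ne_zero) hδ1
    refine ⟨N, fun m hm => lt_of_le_of_lt ?_ hN⟩
    exact pow_le_pow_of_le_one zero_le hδ1.le (le_trans (le_trans hm (Nat.le_of_lt (Nat.lt_two_pow_self))) le_rfl)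
  have hc : CauchySeq f := by
    rw [(Valued.hasBasis_uniformity k ℝ≥0).cauchySeq_iff]
    intro γ _
    set γ' : ℝ≥0ˣ := Units.mk0 (MonoidWithZeroHom.ValueGroup₀.embedding γ.1)
      (MonoidWithZeroHom.ValueGroup₀.embedding_unit_pos γ).ne' with hγ'
    obtain ⟨N, hN⟩ := hNgam γ'
    have aux : ∀ p q, N ≤ p → p ≤ q → Valued.v (f q - f p) < γ' := by
      intro p q hNp hpq
      have : Valued.v (f (p + (q - p)) - f p) ≤ δ ^ (2^p) := mono p (q - p)
      rw [Nat.add_sub_cancel' hpq] at this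
      exact lt_of_le_of_lt this (hN p hNp)
    refine ⟨N, fun q hq p hp => ?_⟩
    show Valued.v.restrict (f p - f q) < γ.1
    rw [Valuation.restrict_lt_iff_lt_embedding]
    change Valued.v (f p - f q) < (γ' : ℝ≥0)
    rcases le_total q p with h | h
    · exact aux q p hq h
    · rw [show f p - f q = -(f q - f p) by ring, Valuation.map_neg]
      exact aux p q hp h
  obtain ⟨y, hy⟩ := cauchySeq_tendsto_of_complete hc
  have t1 : Filter.Tendsto (fun m => f m ^ 2) atTop (nhds (y^2)) := hy.pow 2
  have t2 : Filter.Tendsto (fun m => f m ^ 2) atTop (nhds b) := by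
    intro s hs
    rw [Filter.mem_map]
    obtain ⟨γ, hγ⟩ := Valued.mem_nhds.mp hs
    obtain ⟨N, hN⟩ := hNgam (Units.mk0 (MonoidWithZeroHom.ValueGroup₀.embedding γ.1)
      (MonoidWithZeroHom.ValueGroup₀.embedding_unit_pos γ).ne')
    refine Filter.mem_of_superset (Filter.mem_atTop N) (fun m hm => hγ ?_)
    show Valued.v.restrict (f m ^ 2 - b) < γ.1
    rw [Valuation.restrict_lt_iff_lt_embedding]
    exact lt_of_le_of_lt (inv m).2 (hN m hm)
  exact ⟨y, tendsto_nhds_unique t1 t2⟩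


variable {k : Type} [Field k] [Valued k ℝ≥0]

lemma valRing_le_one (x : valRing k) : Valued.v (x:k) ≤ 1 := x.2

lemma valRing_isUnit_iff (x : valRing k) : IsUnit x ↔ Valued.v (x:k) = 1 := by
  constructor
  · rintro ⟨u, rfl⟩
    have h : ((u * u⁻¹ : valRing k) : k) = 1 := by rw [show ((u:valRing k) * ((u⁻¹:(valRing k)ˣ):valRing k)) = 1 from by exact_mod_cast u.mul_inv]; rfl
    have h2 : Valued.v ((u:valRing k):k) * Valued.v (((u⁻¹:(valRing k)ˣ):valRing k):k) = 1 := by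
      rw [← Valuation.map_mul]; norm_cast at h ⊢; rw [h]; exact Valuation.map_one _
    refine le_antisymm (valRing_le_one _) ?_
    calc (1:ℝ≥0) = _ * _ := h2.symm
    _ ≤ Valued.v ((u:valRing k):k) * 1 := mul_le_mul_right (valRing_le_one _) _
    _ = _ := mul_one _
  · intro h
    have hx0 : (x:k) ≠ 0 := fun h0 => by rw [h0] at h; simp at h
    refine isUnit_iff_exists_inv.mpr ⟨⟨(x:k)⁻¹, ?_⟩, ?_⟩
    · show Valued.v (x:k)⁻¹ ≤ 1
      rw [map_inv₀, h]; norm_num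
    · exact Subtype.ext (mul_inv_cancel₀ hx0)

lemma residue_zero_iff (x : valRing k) :
    IsLocalRing.residue (valRing k) x = 0 ↔ Valued.v (x:k) < 1 := by
  rw [IsLocalRing.residue_eq_zero_iff, IsLocalRing.mem_maximalIdeal, mem_nonunits_iff,
    valRing_isUnit_iff]
  exact ⟨fun h => lt_of_le_of_ne (valRing_le_one x) h, fun h => ne_of_lt h⟩

lemma two_ne_zero_res (hchar : ringChar (resF k) ≠ 2) : (2 : resF k) ≠ 0 := by
  intro h
  have h2 : ((2:ℕ) : resF k) = 0 := by exact_mod_cast h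
  have hdvd : ringChar (resF k) ∣ 2 := (ringChar.spec (resF k) 2).mp h2
  rcases (Nat.dvd_prime Nat.prime_two).mp hdvd with h1 | h1
  · exact CharP.ringChar_ne_one h1
  · exact hchar h1

lemma val_two_eq_one (hchar : ringChar (resF k) ≠ 2) : Valued.v (2:k) = 1 := by
  have hres : IsLocalRing.residue (valRing k) (2 : valRing k) ≠ 0 := by
    rw [map_ofNat]; exact two_ne_zero_res hchar
  have hle : Valued.v (2:k) ≤ 1 := by
    have := valRing_le_one (2 : valRing k)
    rwa [show ((2 : valRing k):k) = (2:k) by norm_cast] at this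
  rcases lt_or_eq_of_le hle with h | h
  · exact absurd ((residue_zero_iff _).mpr (by rwa [show ((2 : valRing k):k) = (2:k) by norm_cast])) hres
  · exact h

section L2
variable {k : Type} [Field k] [Valued k ℝ≥0] [CompleteSpace k]

lemma residue_isotropic_lift (h2 : Valued.v (2:k) = 1) {e : ℕ} (u : Fin e → k)
    (hu : ∀ i, Valued.v (u i) = 1)
    (x' : Fin e → resF k) (hx : x' ≠ 0)
    (h0 : ∑ i, (IsLocalRing.residue (valRing k) ⟨u i, le_of_eq (hu i)⟩) * (x' i)^2 = 0) :
    ∃ x : Fin e → k, x ≠ 0 ∧ ∑ i, u i * (x i)^2 = 0 := by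
  have hsurj := IsLocalRing.residue_surjective (R := valRing k)
  choose X hX using fun i => hsurj (x' i)
  obtain ⟨j, hj⟩ := Function.ne_iff.mp hx
  have hXj : Valued.v ((X j : k)) = 1 := by
    rcases lt_or_eq_of_le (valRing_le_one (X j)) with h | h
    · exact absurd (hX j ▸ (residue_zero_iff (X j)).mpr h) hj
    · exact h
  set T : valRing k := ∑ i, ⟨u i, le_of_eq (hu i)⟩ * (X i)^2 with hT
  have hresT : IsLocalRing.residue (valRing k) T = 0 := by
    rw [hT, map_sum]
    simp only [map_mul, map_pow]
    simp only [hX]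
    exact h0
  have hvT : Valued.v ((T : k)) < 1 := (residue_zero_iff T).mp hresT
  have hTk : (T : k) = ∑ i, u i * (X i : k)^2 := by
    rw [hT]; push_cast; rfl
  have huj0 : u j ≠ 0 := by
    intro h
    have := hu j
    rw [h] at this
    simp at this
  set C : k := ∑ i ∈ Finset.univ.erase j, u i * (X i : k)^2 with hC
  have hTC : (T : k) = C + u j * (X j : k)^2 := by
    rw [hTk, hC, Finset.sum_erase_add]
    exact Finset.mem_univ j
  set b : k := -C / u j with hb
  have hbX : b - (X j : k)^2 = -(T : k) / u j := by
    rw [hb, hTC]; field_simp; ring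
  have hvb : Valued.v (b - (X j:k)^2) < 1 := by
    rw [hbX, map_div₀, Valuation.map_neg, hu j, div_one]
    exact hvT
  obtain ⟨y, hy⟩ := exists_sqrt h2 hXj hvb
  have hbne : b ≠ 0 := by
    intro h
    rw [h, zero_sub, Valuation.map_neg, Valuation.map_pow, hXj, one_pow] at hvb
    exact lt_irrefl _ hvb
  have hyne : y ≠ 0 := fun h => hbne (by rw [← hy, h]; ring)
  refine ⟨Function.update (fun i => (X i : k)) j y, ?_, ?_⟩
  · intro h
    have := congrFun h j
    rw [Function.update_self] at this
    exact hyne this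
  · rw [← Finset.sum_erase_add _ _ (Finset.mem_univ j)]
    have : ∀ i ∈ Finset.univ.erase j, u i * (Function.update (fun i => (X i : k)) j y i)^2
        = u i * (X i : k)^2 := by
      intro i hi
      rw [Function.update_of_ne (Finset.ne_of_mem_erase hi)]
    rw [Finset.sum_congr rfl this, Function.update_self, hy, hb]
    field_simp
    have hrw : (∑ x : Fin e, u x * (X x:k)^2) - u j * (X j:k)^2 = C := by
      rw [← hTk, hTC]; ring
    rw [hC]; ring
end L2

section classes
variable {k : Type} [Field k] [Valued k ℝ≥0]

noncomputable def logv (t : kˣ) : ℝ := Real.log ((Valued.v (t:k) : ℝ≥0) : ℝ)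

lemma vt_ne (t : kˣ) : ((Valued.v (t:k) : ℝ≥0) : ℝ) ≠ 0 := by
  have : Valued.v (t:k) ≠ 0 := (Valuation.ne_zero_iff _).mpr t.ne_zero
  exact_mod_cast this

def logSub (k : Type) [Field k] [Valued k ℝ≥0] : AddSubgroup ℝ where
  carrier := {r | ∃ t : kˣ, logv t = r}
  zero_mem' := ⟨1, by simp [logv]⟩
  add_mem' := by
    rintro x y ⟨t, rfl⟩ ⟨s, rfl⟩
    refine ⟨t * s, ?_⟩
    simp only [logv, Units.val_mul, Valuation.map_mul]
    push_cast
    rw [Real.log_mul (vt_ne t) (vt_ne s)]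
  neg_mem' := by
    rintro x ⟨t, rfl⟩
    refine ⟨t⁻¹, ?_⟩
    simp only [logv]
    rw [Units.val_inv_eq_inv_val, map_inv₀]
    push_cast
    rw [Real.log_inv]

lemma square_class_bound (n : ℕ)
    (hfin : FiniteDimensional ℚ (Submodule.span ℚ (logValueGroup k)))
    (hn : Module.finrank ℚ (Submodule.span ℚ (logValueGroup k)) = n)
    {N : ℕ} (w : Fin N → k) (hw : ∀ i, w i ≠ 0) :
    ∃ (r : ℕ) (c : Fin N → (Fin r → ZMod 2)), r ≤ n ∧
      ∀ i j, c i = c j → ∃ t : kˣ, Valued.v (w i) = Valued.v (w j) * (Valued.v (t:k))^2 := by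
  classical
  set a : Fin N → ℝ := fun i => Real.log ((Valued.v (w i) : ℝ≥0) : ℝ) with ha
  have haL : ∀ i, a i = logv (Units.mk0 (w i) (hw i)) := fun i => rfl
  set M : Submodule ℤ ℝ := Submodule.span ℤ (Set.range a) with hM
  have hML : ∀ x ∈ M, ∃ t : kˣ, logv t = x := by
    intro x hx
    have : M ≤ (logSub k).toIntSubmodule := by
      rw [hM, Submodule.span_le]
      rintro _ ⟨i, rfl⟩
      exact ⟨Units.mk0 (w i) (hw i), rfl⟩
    exact this hx
  set W := Submodule.span ℚ (logValueGroup k) with hW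
  have hMW : ∀ x ∈ M, x ∈ W := by
    intro x hx
    have : M ≤ W.restrictScalars ℤ := by
      rw [hM, Submodule.span_le]
      rintro _ ⟨i, rfl⟩
      refine Submodule.subset_span ⟨(Valued.v (w i) : ℝ≥0), ⟨Units.mk0 (w i) (hw i), rfl⟩, rfl⟩
    exact this hx
  have haM : ∀ i, a i ∈ M := fun i => Submodule.subset_span ⟨i, rfl⟩
  have hfinM : Module.Finite ℤ M := Module.Finite.span_of_finite ℤ (Set.finite_range a)
  have hfreeM : Module.Free ℤ M := Module.free_of_finite_type_torsion_free'
  set ι := Module.Free.ChooseBasisIndex ℤ M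
  set β : Module.Basis ι ℤ M := Module.Free.chooseBasis ℤ M with hβ
  have hcard : Fintype.card ι ≤ n := by
    have h1 : LinearIndependent ℤ (fun b0 : ι => (β b0 : ℝ)) :=
      β.linearIndependent.map' M.subtype (Submodule.ker_subtype M)
    have h2 : LinearIndependent ℚ (fun b0 : ι => (β b0 : ℝ)) :=
      (LinearIndependent.iff_fractionRing ℤ ℚ).mp h1
    have h3 : LinearIndependent ℚ (fun b0 : ι => (⟨(β b0 : ℝ), hMW _ (β b0).2⟩ : W)) :=
      h2.of_comp W.subtype
    have := h3.fintype_card_le_finrank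
    rwa [hn] at this
  set r := Fintype.card ι with hr
  set eqv := Fintype.equivFin ι with heqv
  refine ⟨r, fun i => fun p => ((β.repr ⟨a i, haM i⟩ (eqv.symm p) : ℤ) : ZMod 2), hcard, ?_⟩
  intro i j hc
  set xi : M := ⟨a i, haM i⟩
  set xj : M := ⟨a j, haM j⟩
  have heven : ∀ b0 : ι, (2:ℤ) ∣ β.repr (xi - xj) b0 := by
    intro b0
    have hcb := congrFun hc (eqv b0)
    simp only [Equiv.symm_apply_apply] at hcb
    have : ((β.repr (xi - xj) b0 : ℤ) : ZMod 2) = 0 := by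
      rw [map_sub, Finsupp.sub_apply]
      push_cast
      rw [hcb]
      ring
    exact_mod_cast (ZMod.intCast_zmod_eq_zero_iff_dvd _ 2).mp this
  choose cb hcb using heven
  set z : M := ∑ b0, cb b0 • β b0 with hz
  have hxz : xi - xj = (2:ℤ) • z := by
    have := β.sum_repr (xi - xj)
    rw [← this, hz, Finset.smul_sum]
    refine Finset.sum_congr rfl (fun b0 _ => ?_)
    rw [hcb b0, mul_smul]
  obtain ⟨t, ht⟩ := hML (z:ℝ) z.2
  have hreal : a i - a j = 2 * logv t := by
    have h1 : (xi:ℝ) - (xj:ℝ) = (((2:ℤ) • z : M) : ℝ) := by rw [← hxz]; rfl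
    have h3 : (((2:ℤ) • z : M) : ℝ) = 2 * (z : ℝ) := by
      rw [Submodule.coe_smul, zsmul_eq_mul]
      norm_num
    rw [ht]
    calc a i - a j = (xi:ℝ) - (xj:ℝ) := rfl
    _ = 2 * (z:ℝ) := by rw [h1, h3]
  -- now exponentiate
  refine ⟨t, ?_⟩
  have hwi : (0:ℝ) < ((Valued.v (w i) : ℝ≥0) : ℝ) := by
    have : Valued.v (w i) ≠ 0 := (Valuation.ne_zero_iff _).mpr (hw i)
    positivity
  have hwj : (0:ℝ) < ((Valued.v (w j) : ℝ≥0) : ℝ) := by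
    have : Valued.v (w j) ≠ 0 := (Valuation.ne_zero_iff _).mpr (hw j)
    positivity
  have hvt : (0:ℝ) < ((Valued.v ((t:kˣ):k) : ℝ≥0) : ℝ) := by
    have : Valued.v ((t:kˣ):k) ≠ 0 := (Valuation.ne_zero_iff _).mpr t.ne_zero
    positivity
  have hlog : Real.log (((Valued.v (w i) : ℝ≥0) : ℝ)) =
      Real.log (((Valued.v (w j) : ℝ≥0) : ℝ) * ((Valued.v ((t:kˣ):k) : ℝ≥0) : ℝ)^2) := by
    rw [Real.log_mul (ne_of_gt hwj) (by positivity), Real.log_pow]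
    have := hreal
    simp only [ha, logv] at this
    push_cast
    linarith
  have hR : (((Valued.v (w i) : ℝ≥0) : ℝ)) = (((Valued.v (w j) : ℝ≥0) : ℝ) * ((Valued.v ((t:kˣ):k) : ℝ≥0) : ℝ)^2) := by
    have h1 := Real.exp_log hwi
    have h2 := Real.exp_log (show (0:ℝ) < ((Valued.v (w j) : ℝ≥0) : ℝ) * ((Valued.v ((t:kˣ):k) : ℝ≥0) : ℝ)^2 by positivity)
    rw [← h1, ← h2, hlog]
  have := hR
  push_cast at this
  exact_mod_cast this

end classes

section qf
variable {K : Type} [Field K]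

lemma aniso_of_equiv {M₁ M₂ : Type} [AddCommGroup M₁] [AddCommGroup M₂]
    [Module K M₁] [Module K M₂] {Q1 : QuadraticForm K M₁} {Q2 : QuadraticForm K M₂}
    (h : Q1.Equivalent Q2) (h2 : Q1.Anisotropic) : Q2.Anisotropic := by
  obtain ⟨f⟩ := h
  intro x hx
  have hq : Q1 (f.symm x) = 0 := by rw [f.symm.map_app x]; exact hx
  have := h2 _ hq
  have h0 := congrArg f.toLinearEquiv this
  rwa [show f.toLinearEquiv (f.symm x) = x from f.toLinearEquiv.apply_symm_apply x, map_zero] at h0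

lemma wss_apply {d : ℕ} (w : Fin d → K) (x : Fin d → K) :
    QuadraticMap.weightedSumSquares K w x = ∑ i, w i * x i ^ 2 := by
  rw [QuadraticMap.weightedSumSquares_apply]
  refine Finset.sum_congr rfl fun i _ => ?_
  rw [smul_eq_mul]; ring




end qf



lemma main_bound {k : Type} [Field k] [Valued k ℝ≥0] [CompleteSpace k] (n : ℕ)
    (hfin : FiniteDimensional ℚ (Submodule.span ℚ (logValueGroup k)))
    (hn : Module.finrank ℚ (Submodule.span ℚ (logValueGroup k)) = n)
    (h2v : Valued.v (2:k) = 1)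
    (m : ℝ) (hm : uInvLE (resF k) m) (hm0 : (0:ℝ) ≤ m)
    {N : ℕ} (w : Fin N → k)
    (hW : (QuadraticMap.weightedSumSquares k w).Anisotropic) :
    (N : ℝ) ≤ 2 ^ n * m := by
  classical
  -- weights are nonzero
  have hw : ∀ i, w i ≠ 0 := by
    intro i hi
    have h0 : QuadraticMap.weightedSumSquares k w (Pi.single i 1) = 0 := by
      rw [wss_apply]
      rw [Finset.sum_eq_single i]
      · simp [hi]
      · intro b _ hb
        simp [Pi.single_eq_of_ne hb]
      · intro h; exact absurd (Finset.mem_univ i) h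
    have := hW _ h0
    have := congrFun this i
    simp at this
  -- square classes
  obtain ⟨r, c, hrn, hc⟩ := square_class_bound n hfin hn w hw
  -- fiber bound
  have fiber_bound : ∀ s ∈ Finset.univ.image c,
      (((Finset.univ.filter fun i => c i = s).card : ℝ)) ≤ m := by
    intro s hs
    obtain ⟨j0, _, hj0s⟩ := Finset.mem_image.mp hs
    set S := Finset.univ.filter (fun i => c i = s) with hSdef
    have hj0 : j0 ∈ S := Finset.mem_filter.mpr ⟨Finset.mem_univ _, hj0s⟩
    set e := S.card with he
    set ρ : Fin e ≃ {x // x ∈ S} := S.equivFin.symm with hρ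
    have hmemS : ∀ i : {x // x ∈ S}, c (i:Fin N) = c j0 := by
      intro i
      have h1 : c (i : Fin N) = s := (Finset.mem_filter.mp i.2).2
      rw [h1, hj0s]
    choose t ht using fun i : {x // x ∈ S} => hc (i : Fin N) j0 (hmemS i)
    have hwj0 : Valued.v (w j0) ≠ 0 := (Valuation.ne_zero_iff _).mpr (hw j0)
    have hvt : ∀ i, Valued.v ((t i : kˣ) : k) ≠ 0 := fun i =>
      (Valuation.ne_zero_iff _).mpr (t i).ne_zero
    set u : Fin e → k := fun p => w (ρ p) / (w j0 * ((t (ρ p) : kˣ) : k)^2) with hu_def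
    have hu : ∀ p, Valued.v (u p) = 1 := by
      intro p
      rw [hu_def]
      simp only
      rw [map_div₀, Valuation.map_mul, Valuation.map_pow, ht (ρ p)]
      rw [div_self]
      exact mul_ne_zero hwj0 (pow_ne_zero 2 (hvt (ρ p)))
    have htk0 : ∀ i, ((t i : kˣ) : k) ≠ 0 := fun i => (t i).ne_zero
    -- the scaled subform is anisotropic over k
    have hu_aniso : ∀ x : Fin e → k, ∑ p, u p * (x p)^2 = 0 → x = 0 := by
      intro x hx
      set y : Fin N → k :=
        fun l => if h : l ∈ S then x (S.equivFin ⟨l, h⟩) / ((t ⟨l, h⟩ : kˣ) : k) else 0 with hy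
      have hyval : ∀ i : {x // x ∈ S}, y (i : Fin N) = x (S.equivFin i) / ((t i : kˣ) : k) := by
        intro i
        rw [hy]
        simp only
        rw [dif_pos i.2]
      have hWy : QuadraticMap.weightedSumSquares k w y = 0 := by
        rw [wss_apply]
        have hoff : ∀ l ∈ Finset.univ, l ∉ S → w l * y l ^ 2 = 0 := by
          intro l _ hl
          rw [hy]
          simp only
          rw [dif_neg hl]
          ring
        rw [← Finset.sum_subset (Finset.subset_univ S) hoff]
        rw [← Finset.sum_attach S (fun l => w l * y l ^ 2)]
        have hterm : ∀ i : {x // x ∈ S},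
            w (i : Fin N) * y (i : Fin N) ^ 2 = w j0 * (u (S.equivFin i) * x (S.equivFin i) ^ 2) := by
          intro i
          rw [hyval i, hu_def]
          simp only
          rw [show ρ (S.equivFin i) = i by rw [hρ]; exact S.equivFin.symm_apply_apply i]
          have hne1 : w j0 ≠ 0 := hw j0
          have hne2 : ((t i : kˣ):k) ≠ 0 := htk0 i
          field_simp
        rw [Finset.sum_congr rfl (fun i _ => hterm i)]
        rw [← Finset.mul_sum]
        have hre : ∑ i ∈ S.attach, u (S.equivFin i) * x (S.equivFin i) ^ 2
            = ∑ p : Fin e, u p * x p ^ 2 := by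
          rw [show S.attach = (Finset.univ : Finset {x // x ∈ S}) from rfl]
          exact Fintype.sum_equiv S.equivFin _ _ (fun i => rfl)
        rw [hre, hx, mul_zero]
      have hy0 := hW _ hWy
      funext p
      have := congrFun hy0 ((ρ p : {x // x ∈ S}) : Fin N)
      rw [hyval (ρ p)] at this
      rw [show S.equivFin (ρ p) = p by rw [hρ]; exact S.equivFin.apply_symm_apply p] at this
      have hxp : x p = 0 := by
        field_simp at this
        simpa using this
      rw [hxp]; rfl
    -- the residue form is anisotropic
    have hres_aniso : (QuadraticMap.weightedSumSquares (resF k)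
        (fun p => IsLocalRing.residue (valRing k) ⟨u p, le_of_eq (hu p)⟩)).Anisotropic := by
      intro x' hx'
      by_contra hne
      have h0 : ∑ p, (IsLocalRing.residue (valRing k) ⟨u p, le_of_eq (hu p)⟩) * (x' p)^2 = 0 := by
        rw [← wss_apply]
        exact hx'
      obtain ⟨x, hx0, hxsum⟩ := residue_isotropic_lift h2v u hu x' hne h0
      exact hx0 (hu_aniso x hxsum)
    have := hm e ⟨_, hres_aniso⟩
    exact this
  -- assemble the count
  have hcount : (Finset.univ : Finset (Fin N)).card =
      ∑ s ∈ Finset.univ.image c, (Finset.univ.filter fun i => c i = s).card :=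
    Finset.card_eq_sum_card_fiberwise (fun i _ => Finset.mem_image_of_mem c (Finset.mem_univ i))
  have h1 : (N:ℝ) = ∑ s ∈ Finset.univ.image c,
      (((Finset.univ.filter fun i => c i = s).card : ℝ)) := by
    rw [← Nat.cast_sum]
    norm_cast
    simpa using hcount
  have h2 : (N:ℝ) ≤ ((Finset.univ.image c).card : ℝ) * m := by
    rw [h1]
    calc ∑ s ∈ Finset.univ.image c, (((Finset.univ.filter fun i => c i = s).card : ℝ))
        ≤ ∑ _s ∈ Finset.univ.image c, m := Finset.sum_le_sum fiber_bound
    _ = ((Finset.univ.image c).card : ℝ) * m := by rw [Finset.sum_const, nsmul_eq_mul]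
  have h3 : ((Finset.univ.image c).card : ℝ) ≤ (2:ℝ)^n := by
    have hcard : (Finset.univ.image c).card ≤ 2^r := by
      calc (Finset.univ.image c).card ≤ Fintype.card (Fin r → ZMod 2) := Finset.card_le_univ _
      _ = 2^r := by simp
    calc ((Finset.univ.image c).card : ℝ) ≤ ((2^r : ℕ) : ℝ) := by exact_mod_cast hcard
    _ = (2:ℝ)^r := by push_cast; ring
    _ ≤ (2:ℝ)^n := pow_le_pow_right₀ one_le_two hrn
  calc (N:ℝ) ≤ ((Finset.univ.image c).card : ℝ) * m := h2
  _ ≤ (2:ℝ)^n * m := mul_le_mul_of_nonneg_right h3 hm0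

/-- let `k` be a complete ultrametric field with `char k̃ ≠ 2` and
`dim_ℚ √|k*| = n` finite.  Then `u(k) ≤ 2^n · u(k̃)`:  if `u(k̃) ≤ m` then
`u(k) ≤ 2^n · m`. -/
theorem stmt4 (k : Type) [Field k] [Valued k ℝ≥0] [CompleteSpace k] (n : ℕ)
    (hfin : FiniteDimensional ℚ (Submodule.span ℚ (logValueGroup k)))
    (hn : valRank k = n)
    (hchar : ringChar (resF k) ≠ 2)
    (m : ℝ) (hm : uInvLE (resF k) m) :
    uInvLE k (2 ^ n * m) := by
  classical
  intro d hqex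
  obtain ⟨q, hq⟩ := hqex
  have hm0 : (0:ℝ) ≤ m := by
    have := hm 0 ⟨0, fun x _ => Subsingleton.elim x 0⟩
    simpa using this
  have h2v : Valued.v (2:k) = 1 := val_two_eq_one hchar
  have h2k : (2:k) ≠ 0 := by
    intro h
    rw [h] at h2v
    simp at h2v
  haveI : Invertible (2:k) := invertibleOfNonzero h2k
  obtain ⟨w, hwq⟩ := q.equivalent_weightedSumSquares
  have hW : (QuadraticMap.weightedSumSquares k w).Anisotropic := aniso_of_equiv hwq hq
  have hNd : Module.finrank k (Fin d → k) = d := by simp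
  unfold valRank at hn
  have := main_bound n hfin hn h2v m hm hm0 w hW
  rwa [hNd] at this
end

section
/- Let k be a field of characteristic ≠ 2 and suppose every element of a finite list a₁,…,a_s ∈ k* can be written aᵢ = uᵢ·θ_{j(i)}·bᵢ² where the θ_j range over a fixed set of 2^n elements of k*, uᵢ lies in a fixed subgroup U of k*, and bᵢ ∈ k*. If s > 2^n·m and every diagonal quadratic form over k of dimension > m with coefficients in U is isotropic, then the quadratic form ⟨a₁,…,a_s⟩ is isotropic over k. -/
/-- pigeonhole/decomposition step: let `k` be a field of characteristic ≠ 2,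
`U ≤ k*` a subgroup, `θ₁,…,θ_{2^n} ∈ k*`.  Suppose each `aᵢ = uᵢ·θ_{j(i)}·bᵢ²` with
`uᵢ ∈ U`, `bᵢ ∈ k*`.  If `s > 2^n·m` and every diagonal quadratic form over `k` of
dimension `> m` with coefficients in `U` is isotropic, then `⟨a₁,…,a_s⟩` is isotropic. -/
theorem stmt5 (k : Type) [Field k] (h2 : (2 : k) ≠ 0)
    (n m s : ℕ) (hm : 0 < m) (U : Subgroup kˣ) (θ : Fin (2 ^ n) → kˣ)
    (a : Fin s → kˣ)
    (hdec : ∀ i, ∃ u ∈ U, ∃ j : Fin (2 ^ n), ∃ b : kˣ, a i = u * θ j * b ^ 2)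
    (hs : s > 2 ^ n * m)
    (hU : ∀ d : ℕ, d > m → ∀ c : Fin d → kˣ, (∀ i, c i ∈ U) →
      ∃ x : Fin d → k, x ≠ 0 ∧ ∑ i, (c i : k) * x i ^ 2 = 0) :
    ∃ x : Fin s → k, x ≠ 0 ∧ ∑ i, (a i : k) * x i ^ 2 = 0 := by
  choose u hu j b hab using hdec
  -- pigeonhole
  obtain ⟨j0, -, hj0⟩ :=
    Finset.exists_lt_card_fiber_of_mul_lt_card_of_maps_to
      (s := (Finset.univ : Finset (Fin s))) (t := (Finset.univ : Finset (Fin (2 ^ n))))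
      (f := j) (n := m) (fun i _ => Finset.mem_univ _)
      (by simpa using hs)
  set T : Finset (Fin s) := Finset.univ.filter (fun i => j i = j0) with hT
  set d : ℕ := T.card with hd
  have hdm : d > m := hj0
  let e : {x // x ∈ T} ≃ Fin d := T.equivFin
  obtain ⟨y, hy0, hysum⟩ := hU d hdm (fun q => u (e.symm q)) (fun q => hu _)
  refine ⟨fun i => if h : i ∈ T then (y (e ⟨i, h⟩) : k) / (b i : k) else 0, ?_, ?_⟩
  · intro hx
    apply hy0
    funext q
    have hq := congrFun hx ((e.symm q : {x // x ∈ T}) : Fin s)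
    simp only [(e.symm q).2, dif_pos, Subtype.coe_eta, Equiv.apply_symm_apply] at hq
    have hb : (b ((e.symm q : {x // x ∈ T}) : Fin s) : k) ≠ 0 := Units.ne_zero _
    field_simp at hq
    simpa using hq
  · have hzero : ∀ i ∈ Finset.univ \ T, (a i : k) *
        (if h : i ∈ T then (y (e ⟨i, h⟩) : k) / (b i : k) else 0) ^ 2 = 0 := by
      intro i hi
      rw [Finset.mem_sdiff] at hi
      rw [dif_neg hi.2]
      ring
    rw [← Finset.sum_subset T.subset_univ (fun i _ hi => hzero i (by simp [hi]))]
    have main : ∑ i ∈ T, (a i : k) *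
        (if h : i ∈ T then (y (e ⟨i, h⟩) : k) / (b i : k) else 0) ^ 2
        = ∑ q : Fin d, (θ j0 : k) * ((u ((e.symm q : {x // x ∈ T}) : Fin s) : k) * y q ^ 2) := by
      refine Finset.sum_bij' (fun i hi => e ⟨i, hi⟩)
        (fun q _ => ((e.symm q : {x // x ∈ T}) : Fin s)) ?_ ?_ ?_ ?_ ?_
      · intro i hi; exact Finset.mem_univ _
      · intro q hq; exact (e.symm q).2
      · intro i hi; simp
      · intro q hq; simp [Subtype.coe_eta]
      · intro i hi
        rw [dif_pos hi]
        have hji : j i = j0 := by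
          have h2 := hi
          rw [hT, Finset.mem_filter] at h2
          exact h2.2
        have h3 := hab i
        rw [hji] at h3
        have hb : (b i : k) ≠ 0 := Units.ne_zero _
        rw [h3]
        simp only [Equiv.symm_apply_apply]
        push_cast
        field_simp
    rw [main, ← Finset.mul_sum, hysum, mul_zero]
end

section
/- Let F be a complete discretely valued field whose residue field F̃ has characteristic ≠ 2. Then u(F) = 2·u(F̃) (Springer's theorem for complete nondyadic discretely valued fields). -/
/-- The `u`-invariant of a field: the supremum of dimensions of anisotropic quadratic
forms over it (as an extended natural number). -/
noncomputable def uInv (K : Type) [Field K] : ℕ∞ :=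
  ⨆ (d : ℕ) (_ : ∃ q : QuadraticForm K (Fin d → K), q.Anisotropic), (d : ℕ∞)

namespace Stmt13Aux

open Finset IsLocalRing Polynomial

variable {K : Type} [Field K]

/-- anisotropy of the diagonal quadratic form with weights `w` -/
def AnisoW {ι : Type} [Fintype ι] (w : ι → K) : Prop :=
  ∀ x : ι → K, ∑ i, w i * x i ^ 2 = 0 → x = 0

theorem anisoW_comp {ι ι' : Type} [Fintype ι] [Fintype ι'] (e : ι' ≃ ι) {w : ι → K}
    (h : AnisoW w) : AnisoW (w ∘ e) := by
  intro x hx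
  have hsum : ∑ j, w j * (x (e.symm j)) ^ 2 = 0 := by
    rw [← Equiv.sum_comp e (fun j => w j * (x (e.symm j)) ^ 2)]
    simpa using hx
  have h0 := h _ hsum
  funext i
  have h1 := congrFun h0 (e i)
  simpa using h1

theorem anisoW_zero : AnisoW (fun _ : Fin 0 => (0 : K)) := by
  intro x _
  funext i
  exact absurd i.2 (Nat.not_lt_zero _)

theorem exists_aniso_iff [Invertible (2 : K)] (d : ℕ) :
    (∃ q : QuadraticForm K (Fin d → K), q.Anisotropic) ↔ ∃ w : Fin d → K, AnisoW w := by
  constructor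
  · rintro ⟨q, hq⟩
    obtain ⟨w, ⟨f⟩⟩ := q.equivalent_weightedSumSquares
    have hw : AnisoW w := by
      intro x hx
      have h0 : QuadraticMap.weightedSumSquares K w x = 0 := by
        rw [QuadraticMap.weightedSumSquares_apply]
        simpa [smul_eq_mul, pow_two] using hx
      have h1 : q (f.symm x) = 0 := by
        rw [f.symm.map_app x, h0]
      have h2 := hq _ h1
      have : x = f (f.symm x) := (f.apply_symm_apply x).symm
      rw [this, h2, map_zero]
    have hrk : d = Module.finrank K (Fin d → K) := (Module.finrank_fin_fun K).symm
    exact ⟨w ∘ (finCongr hrk), anisoW_comp (finCongr hrk) hw⟩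
  · rintro ⟨w, hw⟩
    refine ⟨QuadraticMap.weightedSumSquares K w, ?_⟩
    intro x hx
    apply hw
    rw [QuadraticMap.weightedSumSquares_apply] at hx
    simpa [smul_eq_mul, pow_two] using hx


variable {R : Type} [CommRing R] [IsDomain R] [IsDiscreteValuationRing R]

local notation "F" => FractionRing R
local notation "AM" => algebraMap R (FractionRing R)
local notation "k" => IsLocalRing.ResidueField R
local notation "φ" => IsLocalRing.residue R

theorem residue_eq_zero_iff (x : R) : φ x = 0 ↔ x ∈ maximalIdeal R :=
  Ideal.Quotient.eq_zero_iff_mem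

/-- clearing denominators and powers of the uniformizer -/
theorem exists_unit_scale {ι : Type} [Fintype ι] (x : ι → F) (hx : x ≠ 0) :
    ∃ (y : ι → R) (j : ι) (c : F), IsUnit (y j) ∧ c ≠ 0 ∧
      ∀ i, AM (y i) = c * x i := by
  obtain ⟨b, hb⟩ := IsLocalization.exist_integer_multiples (nonZeroDivisors R) Finset.univ x
  choose t ht using fun i => hb i (Finset.mem_univ i)
  have hbF : AM (b : R) ≠ 0 := by
    rw [map_ne_zero_iff _ (IsFractionRing.injective R F)]
    exact nonZeroDivisors.coe_ne_zero b
  have htx : ∀ i, AM (t i) = AM (b : R) * x i := by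
    intro i
    rw [ht i]
    exact (Algebra.smul_def _ _)
  have htne : t ≠ 0 := by
    intro h0
    apply hx
    funext i
    have := htx i
    rw [h0] at this
    simp only [Pi.zero_apply, map_zero] at this
    rcases mul_eq_zero.mp this.symm with h | h
    · exact absurd h hbF
    · exact h
  obtain ⟨ϖ, hϖ⟩ := IsDiscreteValuationRing.exists_irreducible R
  have hϖ0 : ϖ ≠ 0 := hϖ.ne_zero
  have hϖF : AM ϖ ≠ 0 := by
    rw [map_ne_zero_iff _ (IsFractionRing.injective R F)]; exact hϖ0
  have hIne : Ideal.span (Set.range t) ≠ ⊥ := by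
    rw [Ne, Ideal.span_eq_bot]
    intro h
    apply htne
    funext i
    exact h _ (Set.mem_range_self i)
  obtain ⟨n, hI⟩ := IsDiscreteValuationRing.ideal_eq_span_pow_irreducible hIne hϖ
  have hmem : ∀ i, ϖ ^ n ∣ t i := by
    intro i
    rw [← Ideal.mem_span_singleton, ← hI]
    exact Ideal.subset_span (Set.mem_range_self i)
  choose z hz using hmem
  have hj : ∃ j, IsUnit (z j) := by
    by_contra h
    push_neg at h
    have hzm : ∀ i, ϖ ∣ z i := by
      intro i
      have := h i
      rw [← Ideal.mem_span_singleton, ← hϖ.maximalIdeal_eq]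
      exact this
    have hle : Ideal.span (Set.range t) ≤ Ideal.span {ϖ ^ (n + 1)} := by
      rw [Ideal.span_le]
      rintro _ ⟨i, rfl⟩
      obtain ⟨s, hs⟩ := hzm i
      show t i ∈ Ideal.span {ϖ ^ (n + 1)}
      rw [Ideal.mem_span_singleton, hz i, hs]
      exact ⟨s, by ring⟩
    have hpow : ϖ ^ (n + 1) ∣ ϖ ^ n := by
      rw [← Ideal.mem_span_singleton]
      apply hle
      rw [hI]
      exact Ideal.mem_span_singleton_self _
    obtain ⟨r, hr⟩ := hpow
    have heq : ϖ ^ n * 1 = ϖ ^ n * (ϖ * r) := by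
      rw [mul_one]
      calc ϖ ^ n = ϖ ^ (n + 1) * r := hr
        _ = ϖ ^ n * (ϖ * r) := by ring
    have h1 : (1 : R) = ϖ * r := mul_left_cancel₀ (pow_ne_zero n hϖ0) heq
    exact hϖ.not_isUnit (IsUnit.of_mul_eq_one _ h1.symm)
  obtain ⟨j, hj⟩ := hj
  refine ⟨z, j, AM (b : R) * ((AM ϖ) ^ n)⁻¹, hj, ?_, ?_⟩
  · exact mul_ne_zero hbF (inv_ne_zero (pow_ne_zero _ hϖF))
  · intro i
    have h1 : (AM ϖ) ^ n * AM (z i) = AM (b : R) * x i := by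
      rw [← map_pow, ← map_mul, ← hz i, htx i]
    have hp : (AM ϖ) ^ n ≠ 0 := pow_ne_zero _ hϖF
    field_simp
    rw [← h1]; ring

theorem zero_transfer {ι : Type} [Fintype ι] (w : ι → R) (x : ι → F) (hx : x ≠ 0)
    (hsum : ∑ i, AM (w i) * x i ^ 2 = 0) :
    ∃ y : ι → R, (∃ j, IsUnit (y j)) ∧ ∑ i, w i * y i ^ 2 = 0 := by
  obtain ⟨y, j, c, hyj, hc, hyc⟩ := exists_unit_scale x hx
  refine ⟨y, ⟨j, hyj⟩, ?_⟩
  apply IsFractionRing.injective R F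
  rw [map_sum, map_zero]
  have : ∑ i, AM (w i * y i ^ 2) = c ^ 2 * ∑ i, AM (w i) * x i ^ 2 := by
    rw [Finset.mul_sum]
    refine Finset.sum_congr rfl fun i _ => ?_
    rw [map_mul, map_pow, hyc i]
    ring
  rw [this, hsum, mul_zero]

/-- the first residue form and the second residue form anisotropic implies
`⟨u⟩ ⊥ ϖ⟨v⟩` anisotropic over `F`. -/
theorem lift_aniso {ι ι' : Type} [Fintype ι] [Fintype ι'] {ϖ : R} (hϖ : Irreducible ϖ)
    (u : ι → R) (v : ι' → R)
    (hu : AnisoW (fun i => φ (u i))) (hv : AnisoW (fun i => φ (v i))) :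
    AnisoW (Sum.elim (fun i => AM (u i)) (fun i => AM ϖ * AM (v i))) := by
  intro x hx
  by_contra hxne
  have hx' : ∑ i, AM ((Sum.elim u (fun i => ϖ * v i)) i) * x i ^ 2 = 0 := by
    rw [← hx]
    refine Finset.sum_congr rfl fun i _ => ?_
    rcases i with i | i <;> simp [map_mul]
  obtain ⟨y, ⟨j, hj⟩, hy⟩ := zero_transfer _ x hxne hx'
  rw [Fintype.sum_sum_type] at hy
  simp only [Sum.elim_inl, Sum.elim_inr] at hy
  -- hy : ∑ u i * y (inl i)^2 + ∑ (ϖ * v i) * y (inr i)^2 = 0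
  have hϖm : φ ϖ = 0 := by
    rw [residue_eq_zero_iff, hϖ.maximalIdeal_eq]
    exact Ideal.mem_span_singleton_self _
  have hp0 : (fun i => φ (y (Sum.inl i))) = 0 := by
    apply hu
    have := congrArg φ hy
    simp only [map_add, map_sum, map_mul, map_pow, map_zero, hϖm, zero_mul, mul_zero] at this
    simpa using this
  have hdvd : ∀ i : ι, ϖ ∣ y (Sum.inl i) := by
    intro i
    have : φ (y (Sum.inl i)) = 0 := congrFun hp0 i
    rw [residue_eq_zero_iff, hϖ.maximalIdeal_eq, Ideal.mem_span_singleton] at this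
    exact this
  choose s hs using hdvd
  have h1 : ∑ i, u i * y (Sum.inl i) ^ 2 = ϖ ^ 2 * ∑ i, u i * s i ^ 2 := by
    rw [Finset.mul_sum]
    exact Finset.sum_congr rfl fun i _ => by rw [hs i]; ring
  have hb : ∑ i : ι', ϖ * v i * y (Sum.inr i) ^ 2 = ϖ * ∑ i : ι', v i * y (Sum.inr i) ^ 2 := by
    rw [Finset.mul_sum]
    exact Finset.sum_congr rfl fun i _ => by ring
  have hy2 : ϖ * (ϖ * ∑ i, u i * s i ^ 2 + ∑ i, v i * y (Sum.inr i) ^ 2) = 0 := by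
    rw [← hy, h1, hb]
    ring
  have hinner : ϖ * ∑ i, u i * s i ^ 2 + ∑ i, v i * y (Sum.inr i) ^ 2 = 0 :=
    (mul_eq_zero.mp hy2).resolve_left hϖ.ne_zero
  have hq0 : (fun i => φ (y (Sum.inr i))) = 0 := by
    apply hv
    have := congrArg φ hinner
    simp only [map_add, map_sum, map_mul, map_pow, map_zero, hϖm, zero_mul] at this
    simpa using this
  have hnotunit : ∀ (r : R), φ r = 0 → ¬IsUnit r := by
    intro r hr hur
    rw [residue_eq_zero_iff] at hr
    exact (IsLocalRing.notMem_maximalIdeal.mpr hur) hr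
  rcases j with i | i
  · exact hnotunit _ (congrFun hp0 i) hj
  · exact hnotunit _ (congrFun hq0 i) hj

/-- restriction of an anisotropic diagonal form to a subtype -/
theorem anisoW_restrict {ι : Type} [Fintype ι] (p : ι → Prop) [DecidablePred p]
    {w : ι → K} (h : AnisoW w) : AnisoW (fun i : Subtype p => w i) := by
  intro x hx
  set X : ι → K := fun j => if hj : p j then x ⟨j, hj⟩ else 0 with hX
  have hsum : ∑ j, w j * X j ^ 2 = 0 := by
    rw [← Finset.sum_filter_add_sum_filter_not Finset.univ p]
    have h2 : ∑ j ∈ Finset.univ.filter (fun j => ¬ p j), w j * X j ^ 2 = 0 := by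
      refine Finset.sum_eq_zero fun j hj => ?_
      rw [Finset.mem_filter] at hj
      simp [hX, dif_neg hj.2]
    have h1 : ∑ j ∈ Finset.univ.filter p, w j * X j ^ 2
        = ∑ i : Subtype p, w i * x i ^ 2 := by
      rw [Finset.sum_subtype (p := p) (Finset.univ.filter p) (fun x => by simp) (fun j => w j * X j ^ 2)]
      refine Finset.sum_congr rfl fun i _ => ?_
      simp [hX, dif_pos i.2]
    rw [h1, h2, hx, add_zero]
  have h0 := h X hsum
  funext i
  have := congrFun h0 i
  simpa [hX, dif_pos i.2] using this

/-- Hensel's lemma step: a unit-coefficient diagonal form anisotropic over F has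
anisotropic residue form. -/
theorem hensel_core [IsAdicComplete (maximalIdeal R) R] (h2 : IsUnit (2 : R))
    {ι : Type} [Fintype ι] (u : ι → R) (hu : ∀ i, IsUnit (u i))
    (hF : AnisoW (fun i => AM (u i))) : AnisoW (fun i => φ (u i)) := by
  classical
  intro x hx
  by_contra hxne
  have hj : ∃ j, x j ≠ 0 := by
    by_contra h
    push_neg at h
    exact hxne (funext h)
  obtain ⟨j, hxj⟩ := hj
  have hsurj := IsLocalRing.residue_surjective (R := R)
  choose a ha using fun i => hsurj (x i)
  have haj : IsUnit (a j) := by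
    rw [← IsLocalRing.notMem_maximalIdeal, ← residue_eq_zero_iff]
    rw [ha j]
    exact hxj
  set S : R := ∑ i, u i * a i ^ 2 with hS
  have hSm : S ∈ maximalIdeal R := by
    rw [← residue_eq_zero_iff]
    rw [hS, map_sum]
    rw [← hx]
    refine Finset.sum_congr rfl fun i _ => ?_
    rw [map_mul, map_pow, ha i]
  obtain ⟨uj, huj⟩ := (hu j).exists_right_inv
  -- polynomial f = X^2 + C (uj * (S - u j * a j ^ 2))
  set c : R := uj * (S - u j * a j ^ 2) with hc
  set f : R[X] := X ^ 2 + C c with hf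
  have hmonic : f.Monic := by
    apply monic_X_pow_add_C
    norm_num
  have heval : f.eval (a j) ∈ maximalIdeal R := by
    have : u j * f.eval (a j) = S := by
      rw [hf, hc]
      simp only [eval_add, eval_pow, eval_X, eval_C]
      calc u j * (a j ^ 2 + uj * (S - u j * a j ^ 2))
          = u j * a j ^ 2 + (u j * uj) * (S - u j * a j ^ 2) := by ring
        _ = S := by rw [huj]; ring
    have h' : u j * f.eval (a j) ∈ maximalIdeal R := this ▸ hSm
    obtain ⟨w, hw⟩ := (hu j).exists_left_inv
    have : f.eval (a j) = w * (u j * f.eval (a j)) := by rw [← mul_assoc, hw, one_mul]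
    rw [this]
    exact Ideal.mul_mem_left _ _ h'
  have hderiv : IsUnit (Ideal.Quotient.mk (maximalIdeal R) (f.derivative.eval (a j))) := by
    have hd : f.derivative.eval (a j) = 2 * a j := by
      rw [hf]
      simp [derivative_X_pow]
      left; norm_num
    rw [hd]
    exact (h2.mul haj).map _
  obtain ⟨b, hroot, hb⟩ := HenselianRing.is_henselian (I := maximalIdeal R)
    f hmonic (a j) heval hderiv
  have hbu : IsUnit b := by
    rw [← IsLocalRing.notMem_maximalIdeal]
    intro hbm
    have : a j ∈ maximalIdeal R := by
      have : a j = b - (b - a j) := by ring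
      rw [this]
      exact Ideal.sub_mem _ hbm hb
    exact (IsLocalRing.notMem_maximalIdeal.mpr haj) this
  set z : ι → R := Function.update a j b with hz
  have hzsum : ∑ i, u i * z i ^ 2 = 0 := by
    have hsplit : ∑ i, u i * z i ^ 2
        = u j * z j ^ 2 + ∑ i ∈ Finset.univ.erase j, u i * z i ^ 2 :=
      (Finset.add_sum_erase _ _ (Finset.mem_univ j)).symm
    have hsplit' : S = u j * a j ^ 2 + ∑ i ∈ Finset.univ.erase j, u i * a i ^ 2 :=
      (Finset.add_sum_erase _ _ (Finset.mem_univ j)).symm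
    have herase : ∑ i ∈ Finset.univ.erase j, u i * z i ^ 2
        = ∑ i ∈ Finset.univ.erase j, u i * a i ^ 2 := by
      refine Finset.sum_congr rfl fun i hi => ?_
      rw [hz, Function.update_of_ne (Finset.ne_of_mem_erase hi)]
    have hzj : z j = b := by rw [hz, Function.update_self]
    have hfb : b ^ 2 + c = 0 := by
      have := hroot
      rw [hf] at this
      simpa [Polynomial.IsRoot] using this
    rw [hsplit, herase, hzj]
    have : u j * b ^ 2 = -(u j * c) := by
      have : u j * (b ^ 2 + c) = 0 := by rw [hfb, mul_zero]
      linear_combination this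
    rw [this, hc]
    have hujc : u j * (uj * (S - u j * a j ^ 2)) = S - u j * a j ^ 2 := by
      calc u j * (uj * (S - u j * a j ^ 2)) = (u j * uj) * (S - u j * a j ^ 2) := by ring
        _ = S - u j * a j ^ 2 := by rw [huj, one_mul]
    rw [hujc]
    have := hsplit'
    linear_combination -this
  have hAz : ∑ i, AM (u i) * (AM (z i)) ^ 2 = 0 := by
    rw [← map_zero (algebraMap R (FractionRing R)), ← hzsum, map_sum]
    exact Finset.sum_congr rfl fun i _ => by rw [map_mul, map_pow]
  have hz0 := hF _ hAz
  have : AM (z j) = 0 := congrFun hz0 j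
  rw [map_eq_zero_iff _ (IsFractionRing.injective R F)] at this
  rw [hz, Function.update_self] at this
  exact hbu.ne_zero this

theorem exists_norm_weight {ϖ : R} (hϖ : Irreducible ϖ) (w : F) (hw : w ≠ 0) :
    ∃ (b : R) (c : F), c ≠ 0 ∧ w = AM b * c ^ 2 ∧
      (IsUnit b ∨ ∃ u : R, IsUnit u ∧ b = ϖ * u) := by
  have hinj := IsFractionRing.injective R (FractionRing R)
  have hϖF : AM ϖ ≠ 0 := by
    rw [map_ne_zero_iff _ hinj]; exact hϖ.ne_zero
  obtain ⟨r, s, hs, hrs⟩ := IsFractionRing.div_surjective (A := R) w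
  have hs0 : s ≠ 0 := nonZeroDivisors.ne_zero hs
  have hr0 : r ≠ 0 := by
    intro h
    apply hw
    rw [← hrs, h, map_zero, zero_div]
  obtain ⟨n₁, u₁, hru⟩ := IsDiscreteValuationRing.eq_unit_mul_pow_irreducible hr0 hϖ
  obtain ⟨n₂, u₂, hsu⟩ := IsDiscreteValuationRing.eq_unit_mul_pow_irreducible hs0 hϖ
  set e : ℤ := (n₁ : ℤ) - n₂ with he
  set b : R := (u₁ : R) * ((u₂⁻¹ : Rˣ) : R) * ϖ ^ (e % 2).toNat with hb
  set c : F := (AM ϖ) ^ (e / 2) with hc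
  have hcne : c ≠ 0 := zpow_ne_zero _ hϖF
  have hemod : (((e % 2).toNat : ℤ)) = e % 2 :=
    Int.toNat_of_nonneg (Int.emod_nonneg e (by norm_num))
  have hkey : (AM ϖ) ^ ((e % 2).toNat : ℤ) * c ^ 2 = (AM ϖ) ^ e := by
    rw [hc, ← zpow_natCast ((AM ϖ) ^ (e / 2)) 2, ← zpow_mul, ← zpow_add₀ hϖF]
    congr 1
    rw [hemod]
    omega
  have hu2 : AM ((u₂⁻¹ : Rˣ) : R) = (AM ((u₂ : Rˣ) : R))⁻¹ := by
    have h1 : AM ((u₂⁻¹ : Rˣ) : R) * AM ((u₂ : Rˣ) : R) = 1 := by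
      rw [← map_mul]
      norm_cast
      rw [inv_mul_cancel]
      exact map_one _
    exact eq_inv_of_mul_eq_one_left h1
  have hu2F : AM ((u₂ : Rˣ) : R) ≠ 0 := by
    rw [map_ne_zero_iff _ hinj]
    exact u₂.ne_zero
  have hwe : w = AM (u₁ : R) * (AM ((u₂ : Rˣ) : R))⁻¹ * (AM ϖ) ^ e := by
    rw [← hrs, hru, hsu]
    rw [map_mul, map_mul, map_pow, map_pow]
    rw [he]
    rw [zpow_sub₀ hϖF]
    rw [zpow_natCast, zpow_natCast]
    field_simp
  refine ⟨b, c, hcne, ?_, ?_⟩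
  · rw [hwe, hb, map_mul, map_mul, map_pow, hu2]
    rw [← hkey]
    rw [zpow_natCast]
    ring
  · rcases Int.emod_two_eq_zero_or_one e with h | h
    · left
      rw [hb, h]
      simp only [Int.toNat_zero, pow_zero, mul_one]
      exact (u₁.isUnit).mul (u₂⁻¹).isUnit
    · right
      refine ⟨(u₁ : R) * ((u₂⁻¹ : Rˣ) : R), (u₁.isUnit).mul (u₂⁻¹).isUnit, ?_⟩
      rw [hb, h]
      simp only [Int.toNat_one, pow_one]
      ring

theorem combine_aniso {m n : ℕ} {w₁ : Fin m → k} (h₁ : AnisoW w₁)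
    {w₂ : Fin n → k} (h₂ : AnisoW w₂) : ∃ w : Fin (m + n) → F, AnisoW w := by
  obtain ⟨ϖ, hϖ⟩ := IsDiscreteValuationRing.exists_irreducible R
  choose u hu using fun i => IsLocalRing.residue_surjective (R := R) (w₁ i)
  choose v hv using fun i => IsLocalRing.residue_surjective (R := R) (w₂ i)
  have hu' : AnisoW (fun i => φ (u i)) := by
    have : (fun i => φ (u i)) = w₁ := funext hu
    rw [this]; exact h₁
  have hv' : AnisoW (fun i => φ (v i)) := by
    have : (fun i => φ (v i)) = w₂ := funext hv
    rw [this]; exact h₂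
  exact ⟨_, anisoW_comp finSumFinEquiv.symm (lift_aniso hϖ u v hu' hv')⟩

theorem split_aniso [IsAdicComplete (maximalIdeal R) R] (h2 : IsUnit (2 : R))
    {d : ℕ} (w : Fin d → F) (hw : AnisoW w) :
    ∃ m n : ℕ, m + n = d ∧ (∃ w₁ : Fin m → k, AnisoW w₁) ∧ (∃ w₂ : Fin n → k, AnisoW w₂) := by
  classical
  obtain ⟨ϖ, hϖ⟩ := IsDiscreteValuationRing.exists_irreducible R
  have hw0 : ∀ i, w i ≠ 0 := by
    intro i hi
    have hsum : ∑ j, w j * (fun j => if j = i then (1 : F) else 0) j ^ 2 = 0 := by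
      rw [Finset.sum_eq_single i]
      · simp [hi]
      · intro j _ hj
        simp [if_neg hj]
      · intro hmem
        exact absurd (Finset.mem_univ i) hmem
    have h0 := hw _ hsum
    have h1 := congrFun h0 i
    simp at h1
  choose b c hc hbc hprop using fun i => exists_norm_weight hϖ (w i) (hw0 i)
  have hAb : AnisoW (fun i => AM (b i)) := by
    intro x hx
    have hsum : ∑ i, w i * (x i * (c i)⁻¹) ^ 2 = 0 := by
      rw [← hx]
      refine Finset.sum_congr rfl fun i _ => ?_
      rw [hbc i]
      have hc2 : (c i) ^ 2 ≠ 0 := pow_ne_zero _ (hc i)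
      field_simp
      rw [div_eq_iff (hc i)]
      ring
    have h0 := hw _ hsum
    funext i
    have h1 := congrFun h0 i
    simp only [Pi.zero_apply] at h1 ⊢
    rcases mul_eq_zero.mp h1 with h | h
    · exact h
    · exact absurd (inv_eq_zero.mp h) (hc i)
  set p : Fin d → Prop := fun i => IsUnit (b i) with hp
  have hA1 : AnisoW (fun i : Subtype p => AM (b i)) := anisoW_restrict p hAb
  have hk1 : AnisoW (fun i : Subtype p => φ (b i)) :=
    hensel_core h2 _ (fun i => i.2) hA1
  have hne : ∀ i : {i // ¬ p i}, ∃ u, IsUnit u ∧ b i = ϖ * u :=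
    fun i => (hprop i).resolve_left i.2
  choose v hv1 hv2 using hne
  have hA2' : AnisoW (fun i : {i // ¬ p i} => AM (b i)) := anisoW_restrict _ hAb
  have hA2 : AnisoW (fun i : {i // ¬ p i} => AM (v i)) := by
    intro x hx
    apply hA2'
    have : ∑ i : {i // ¬ p i}, AM (b i) * x i ^ 2
        = AM ϖ * ∑ i : {i // ¬ p i}, AM (v i) * x i ^ 2 := by
      rw [Finset.mul_sum]
      refine Finset.sum_congr rfl fun i _ => ?_
      rw [hv2 i, map_mul]
      ring
    rw [this, hx, mul_zero]
  have hk2 : AnisoW (fun i : {i // ¬ p i} => φ (v i)) :=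
    hensel_core h2 v hv1 hA2
  refine ⟨Fintype.card (Subtype p), Fintype.card {i // ¬ p i}, ?_, ?_, ?_⟩
  · have hcard := Fintype.card_congr (Equiv.sumCompl p)
    simpa [Fintype.card_sum] using hcard
  · exact ⟨_, anisoW_comp (Fintype.equivFin (Subtype p)).symm hk1⟩
  · exact ⟨_, anisoW_comp (Fintype.equivFin {i // ¬ p i}).symm hk2⟩


end Stmt13Aux

open Stmt13Aux IsLocalRing in
/-- Springer: let `F` be a complete discretely valued field (the fraction
field of a complete discrete valuation ring `R`) with residue field `F̃` of
characteristic ≠ 2.  Then `u(F) = 2 · u(F̃)`. -/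
theorem stmt13 (R : Type) [CommRing R] [IsDomain R] [IsDiscreteValuationRing R]
    [IsAdicComplete (IsLocalRing.maximalIdeal R) R]
    (hchar : ringChar (IsLocalRing.ResidueField R) ≠ 2) :
    uInv (FractionRing R) = 2 * uInv (IsLocalRing.ResidueField R) := by
  have h2k : (2 : ResidueField R) ≠ 0 := by
    intro h
    have hd : ringChar (ResidueField R) ∣ 2 := by
      rw [← Nat.cast_ofNat (R := ResidueField R) (n := 2)] at h
      exact (ringChar.spec _ 2).mp h
    rcases (Nat.dvd_prime Nat.prime_two).mp hd with h1 | h1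
    · have : ((1 : ℕ) : ResidueField R) = 0 := (ringChar.spec _ 1).mpr (h1 ▸ dvd_refl _)
      simpa using this
    · exact hchar h1
  have hres2 : IsLocalRing.residue R (2 : R) = (2 : ResidueField R) := map_ofNat _ 2
  have h2R : IsUnit (2 : R) := by
    rw [← IsLocalRing.notMem_maximalIdeal]
    intro hm
    exact h2k (hres2 ▸ (Ideal.Quotient.eq_zero_iff_mem.mpr hm))
  have h2F : (2 : FractionRing R) ≠ 0 := by
    intro h
    have h0 : algebraMap R (FractionRing R) (2 : R) = 0 := by
      rw [map_ofNat]; exact h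
    rw [map_eq_zero_iff _ (IsFractionRing.injective R (FractionRing R))] at h0
    exact h2k (by rw [← hres2, h0, map_zero])
  letI : Invertible (2 : FractionRing R) := invertibleOfNonzero h2F
  letI : Invertible (2 : ResidueField R) := invertibleOfNonzero h2k
  set PF : ℕ → Prop :=
    fun d => ∃ q : QuadraticForm (FractionRing R) (Fin d → FractionRing R), q.Anisotropic
    with hPF
  set Pk : ℕ → Prop :=
    fun d => ∃ q : QuadraticForm (ResidueField R) (Fin d → ResidueField R), q.Anisotropic
    with hPk
  have bridgeF : ∀ d, PF d ↔ ∃ w : Fin d → FractionRing R, AnisoW w :=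
    fun d => exists_aniso_iff d
  have bridgek : ∀ d, Pk d ↔ ∃ w : Fin d → ResidueField R, AnisoW w :=
    fun d => exists_aniso_iff d
  have key1 : ∀ m n, Pk m → Pk n → PF (m + n) := by
    intro m n hm hn
    obtain ⟨w₁, h₁⟩ := (bridgek m).mp hm
    obtain ⟨w₂, h₂⟩ := (bridgek n).mp hn
    exact (bridgeF _).mpr (combine_aniso h₁ h₂)
  have key2 : ∀ d, PF d → ∃ m n, m + n = d ∧ Pk m ∧ Pk n := by
    intro d hd
    obtain ⟨w, hw⟩ := (bridgeF d).mp hd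
    obtain ⟨m, n, hmn, h₁, h₂⟩ := split_aniso h2R w hw
    exact ⟨m, n, hmn, (bridgek m).mpr h₁, (bridgek n).mpr h₂⟩
  have huF : uInv (FractionRing R) = ⨆ (d : ℕ) (_ : PF d), (d : ℕ∞) := rfl
  have huk : uInv (ResidueField R) = ⨆ (d : ℕ) (_ : Pk d), (d : ℕ∞) := rfl
  rw [huF, huk]
  apply le_antisymm
  · refine iSup₂_le fun d hd => ?_
    obtain ⟨m, n, hmn, h₁, h₂⟩ := key2 d hd
    have hm : (m : ℕ∞) ≤ ⨆ (d : ℕ) (_ : Pk d), (d : ℕ∞) :=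
      le_iSup₂ (f := fun (d : ℕ) (_ : Pk d) => (d : ℕ∞)) m h₁
    have hn : (n : ℕ∞) ≤ ⨆ (d : ℕ) (_ : Pk d), (d : ℕ∞) :=
      le_iSup₂ (f := fun (d : ℕ) (_ : Pk d) => (d : ℕ∞)) n h₂
    calc (d : ℕ∞) = (m : ℕ∞) + (n : ℕ∞) := by rw [← hmn]; push_cast; rfl
      _ ≤ _ + _ := add_le_add hm hn
      _ = 2 * ⨆ (d : ℕ) (_ : Pk d), (d : ℕ∞) := (two_mul _).symm
  · rw [two_mul]
    set uk := ⨆ (d : ℕ) (_ : Pk d), (d : ℕ∞) with huk'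
    set uF := ⨆ (d : ℕ) (_ : PF d), (d : ℕ∞) with huF'
    by_cases htop : uk = ⊤
    · have hbig : ∀ N : ℕ, (N : ℕ∞) < uF := by
        intro N
        have hN : (N : ℕ∞) < uk := htop ▸ WithTop.coe_lt_top N
        rw [huk', lt_iSup_iff] at hN
        obtain ⟨d, hd⟩ := hN
        have hP : Pk d := by
          by_contra h
          rw [iSup_neg h] at hd
          simp at hd
        rw [iSup_pos hP] at hd
        have hF : PF (d + d) := key1 d d hP hP
        have : ((d + d : ℕ) : ℕ∞) ≤ uF :=
          le_iSup₂ (f := fun (d : ℕ) (_ : PF d) => (d : ℕ∞)) (d + d) hF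
        refine lt_of_lt_of_le ?_ this
        calc (N : ℕ∞) < d := hd
          _ ≤ ((d + d : ℕ) : ℕ∞) := by push_cast; exact le_self_add
      rcases eq_or_ne uF ⊤ with h | h
      · rw [htop, h]
        simp
      · obtain ⟨M, hM⟩ := WithTop.ne_top_iff_exists.mp h
        have := hbig M
        rw [← hM] at this
        exact absurd this (lt_irrefl _)
    · obtain ⟨N, hN⟩ := WithTop.ne_top_iff_exists.mp htop
      set T : Set ℕ := {d | Pk d} with hT
      have hTne : T.Nonempty := ⟨0, (bridgek 0).mpr ⟨_, anisoW_zero⟩⟩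
      have hTb : BddAbove T := by
        refine ⟨N, fun d hd => ?_⟩
        have h1 : (d : ℕ∞) ≤ uk :=
          le_iSup₂ (f := fun (d : ℕ) (_ : Pk d) => (d : ℕ∞)) d hd
        rw [← hN] at h1
        exact WithTop.coe_le_coe.mp h1
      have hMmem : sSup T ∈ T := Nat.sSup_mem hTne hTb
      have hle : uk ≤ ((sSup T : ℕ) : ℕ∞) := by
        refine iSup₂_le fun d hd => ?_
        exact_mod_cast le_csSup hTb hd
      have hsum : uk + uk ≤ ((sSup T + sSup T : ℕ) : ℕ∞) := by
        push_cast
        exact add_le_add hle hle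
      refine hsum.trans ?_
      have hF : PF (sSup T + sSup T) := key1 _ _ hMmem hMmem
      exact le_iSup₂ (f := fun (d : ℕ) (_ : PF d) => (d : ℕ∞)) (sSup T + sSup T) hF
end
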